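/- Let n ≥ 1 and let X : ℝ^n → ℝ^n be a C² vector field, and let L(x,y) = Σ_{j=1}^n (y^j - X^j(x))² be the least squares Lagrangian. Then for every (x,y) ∈ ℝ^n × ℝ^n and every i = 1,…,n, the semispray coefficient G^i(x,y) := (1/4)(Σ_j (∂²L/∂x^j∂y^i)(x,y) · y^j - (∂L/∂x^i)(x,y)) satisfies the explicit formula G^i(x,y) = -(1/2)[ Σ_j (∂X^i/∂x^j(x) - ∂X^j/∂x^i(x)) y^j + Σ_j (∂X^j/∂x^i(x)) X^j(x) ]. -/

import Mathlib

/-- Partial derivative ∂f/∂xʲ of a scalar function on ℝⁿ. -/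
noncomputable def pd {n : ℕ} (f : (Fin n → ℝ) → ℝ) (j : Fin n) (x : Fin n → ℝ) : ℝ :=
  fderiv ℝ f x (Pi.single j 1)

/-- Partial derivative in the x-slot of a function of (x, y). -/
noncomputable def pdx {n : ℕ} (f : (Fin n → ℝ) → (Fin n → ℝ) → ℝ) (i : Fin n)
    (x y : Fin n → ℝ) : ℝ :=
  fderiv ℝ (fun x' => f x' y) x (Pi.single i 1)

/-- Partial derivative in the y-slot of a function of (x, y). -/
noncomputable def pdy {n : ℕ} (f : (Fin n → ℝ) → (Fin n → ℝ) → ℝ) (i : Fin n)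
    (x y : Fin n → ℝ) : ℝ :=
  fderiv ℝ (f x) y (Pi.single i 1)


private lemma hasFDerivAt_sq {E : Type*} [NormedAddCommGroup E] [NormedSpace ℝ E]
    {f : E → ℝ} {f' : E →L[ℝ] ℝ} {x : E} (h : HasFDerivAt f f' x) :
    HasFDerivAt (fun x => f x ^ 2) ((2 * f x) • f') x := by
  have : HasFDerivAt (fun x => f x * f x) (f x • f' + f x • f') x := h.mul h
  simpa [pow_two, two_mul, add_smul] using this

/- STATEMENT 2: explicit formula for the semispray coefficients
Gⁱ = (1/4)(∂²L/∂xʲ∂yⁱ · yʲ - ∂L/∂xⁱ) of the least squares Lagrangian. -/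
theorem semispray_explicit_formula
    (n : ℕ) (hn : 1 ≤ n)
    (X : (Fin n → ℝ) → (Fin n → ℝ)) (hX : ContDiff ℝ 2 X)
    (L : (Fin n → ℝ) → (Fin n → ℝ) → ℝ)
    (hL : ∀ x y, L x y = ∑ j, (y j - X x j) ^ 2)
    (G : Fin n → (Fin n → ℝ) → (Fin n → ℝ) → ℝ)
    (hG : ∀ i x y, G i x y =
      (1 / 4 : ℝ) * ((∑ j, pdx (pdy L i) j x y * y j) - pdx L i x y)) :
    ∀ i x y, G i x y =
      -(1 / 2 : ℝ) * ((∑ j, (pd (fun x' => X x' i) j x - pd (fun x' => X x' j) i x) * y j)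
        + ∑ j, pd (fun x' => X x' j) i x * X x j) := by
  intro i x y
  have hXd : Differentiable ℝ X := hX.differentiable (by norm_num)
  have hXj : ∀ (j : Fin n) (x' : Fin n → ℝ), HasFDerivAt (fun x'' => X x'' j)
      ((ContinuousLinearMap.proj j).comp (fderiv ℝ X x')) x' := fun j x' =>
    (ContinuousLinearMap.proj j : (Fin n → ℝ) →L[ℝ] ℝ).hasFDerivAt.comp x'
      (hXd x').hasFDerivAt
  have hpdX : ∀ j k, pd (fun x' => X x' j) k x = fderiv ℝ X x (Pi.single k 1) j := by
    intro j k
    rw [pd, (hXj j x).fderiv]; rfl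
  -- first y-derivative of L
  have hpdy : ∀ x', pdy L i x' y = 2 * (y i - X x' i) := by
    intro x'
    have h : HasFDerivAt (fun y' : Fin n → ℝ => ∑ j, (y' j - X x' j) ^ 2)
        (∑ j, (2 * (y j - X x' j)) •
          (ContinuousLinearMap.proj j : (Fin n → ℝ) →L[ℝ] ℝ)) y := by
      apply HasFDerivAt.fun_sum
      intro j _
      exact hasFDerivAt_sq (((ContinuousLinearMap.proj j : (Fin n → ℝ) →L[ℝ] ℝ).hasFDerivAt
        (x := y)).sub_const (X x' j))
    rw [pdy, show L x' = fun y' => ∑ j, (y' j - X x' j) ^ 2 from funext (hL x'), h.fderiv]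
    simp [ContinuousLinearMap.sum_apply, Pi.single_apply, mul_ite, Finset.sum_ite_eq']
  -- mixed second derivative
  have hpdxy : ∀ j, pdx (pdy L i) j x y = -2 * fderiv ℝ X x (Pi.single j 1) i := by
    intro j
    have h : HasFDerivAt (fun x' => pdy L i x' y)
        ((2 : ℝ) • (-(ContinuousLinearMap.proj i).comp (fderiv ℝ X x))) x := by
      have h1 : HasFDerivAt (fun x' => 2 * (y i - X x' i))
          ((2 : ℝ) • (-(ContinuousLinearMap.proj i).comp (fderiv ℝ X x))) x :=
        ((hXj i x).const_sub (y i)).const_mul 2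
      exact h1.congr_of_eventuallyEq (Filter.Eventually.of_forall fun x' => (hpdy x'))
    rw [pdx, h.fderiv]
    simp [mul_comm]
  -- x-derivative of L
  have hpdxL : pdx L i x y = ∑ j, 2 * (y j - X x j) * (-(fderiv ℝ X x (Pi.single i 1) j)) := by
    have h : HasFDerivAt (fun x' => ∑ j, (y j - X x' j) ^ 2)
        (∑ j, (2 * (y j - X x j)) •
          (-(ContinuousLinearMap.proj j).comp (fderiv ℝ X x))) x := by
      apply HasFDerivAt.fun_sum
      intro j _
      exact hasFDerivAt_sq ((hXj j x).const_sub (y j))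
    rw [pdx, show (fun x' => L x' y) = fun x' => ∑ j, (y j - X x' j) ^ 2 from
      funext (fun x' => hL x' y), h.fderiv]
    simp [ContinuousLinearMap.sum_apply]
  rw [hG i x y, hpdxL]
  simp only [hpdxy, hpdX]
  rw [mul_sub, mul_add, Finset.mul_sum, Finset.mul_sum, Finset.mul_sum, Finset.mul_sum,
    ← Finset.sum_sub_distrib, ← Finset.sum_add_distrib]
  refine Finset.sum_congr rfl fun j _ => by ring
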